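/- Let a ∈ M_n(F), and let C_a ⊆ F be the F-subalgebra generated by the coefficients of the characteristic polynomial of the left-multiplication operator ã on M_n(F). Then every coefficient of the characteristic polynomial of a is integral over C_a. -/

import Mathlib

open Polynomial Matrix

private lemma stdBasis_repr_matrix {R : Type*} [CommRing R] {m : ℕ}
    (M : Matrix (Fin m) (Fin m) R) (i j : Fin m) :
    (Matrix.stdBasis R (Fin m) (Fin m)).repr M (i, j) = M i j := by
  simp [Matrix.stdBasis, Pi.basis_repr]

private lemma toMatrix_mulLeft {F : Type*} [Field F] {n : ℕ} (a : Matrix (Fin n) (Fin n) F) :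
    LinearMap.toMatrix (Matrix.stdBasis F (Fin n) (Fin n)) (Matrix.stdBasis F (Fin n) (Fin n))
      (LinearMap.mulLeft F a) = blockDiagonal (fun _ : Fin n => a) := by
  ext ⟨i, j⟩ ⟨k, l⟩
  rw [LinearMap.toMatrix_apply, Matrix.stdBasis_eq_single, LinearMap.mulLeft_apply,
    stdBasis_repr_matrix, blockDiagonal_apply, Matrix.mul_apply]
  simp [Matrix.single, and_comm, ite_and, Finset.sum_ite_eq, eq_comm]

private lemma charmatrix_blockDiagonal' {R : Type*} [CommRing R] {m o : ℕ}
    (M : Fin o → Matrix (Fin m) (Fin m) R) :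
    charmatrix (blockDiagonal M) = blockDiagonal (fun k => charmatrix (M k)) := by
  ext ⟨i, j⟩ ⟨k, l⟩
  by_cases h : (i, j) = (k, l)
  · cases h
    simp [charmatrix_apply, blockDiagonal_apply]
  · rw [charmatrix_apply_ne _ _ _ h]
    rcases eq_or_ne j l with rfl | hjl
    · have hik : i ≠ k := fun hik => h (by rw [hik])
      simp [blockDiagonal_apply, charmatrix_apply, hik]
    · simp [blockDiagonal_apply, hjl]

private lemma charpoly_blockDiagonal' {R : Type*} [CommRing R] {m o : ℕ}
    (M : Fin o → Matrix (Fin m) (Fin m) R) :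
    (blockDiagonal M).charpoly = ∏ k, (M k).charpoly := by
  rw [Matrix.charpoly, charmatrix_blockDiagonal', det_blockDiagonal]
  rfl

private lemma charpoly_mulLeft {F : Type*} [Field F] {n : ℕ} (a : Matrix (Fin n) (Fin n) F) :
    (LinearMap.mulLeft F a).charpoly = a.charpoly ^ n := by
  rw [← LinearMap.charpoly_toMatrix (LinearMap.mulLeft F a) (Matrix.stdBasis F (Fin n) (Fin n)),
    toMatrix_mulLeft, charpoly_blockDiagonal', Finset.prod_const, Finset.card_univ,
    Fintype.card_fin]

/-- Every coefficient of the characteristic polynomial of `a ∈ M_n(F)` is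
integral over the subring `C_a` of `F` generated by the coefficients of the
characteristic polynomial of the left-multiplication operator `ã` on `M_n(F)`. -/
theorem stmt4 {F : Type*} [Field F] {n : ℕ} (a : Matrix (Fin n) (Fin n) F)
    (Ca : Subring F)
    (hCa : Ca = Subring.closure
      (Set.range fun i : ℕ => ((LinearMap.mulLeft F a).charpoly).coeff i)) :
    ∀ i : ℕ, IsIntegral Ca (a.charpoly.coeff i) := by
  have hcoeff : ∀ i : ℕ, ((LinearMap.mulLeft F a).charpoly).coeff i ∈ Ca := by
    intro i
    rw [hCa]
    exact Subring.subset_closure ⟨i, rfl⟩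
  intro i
  have hlift : (LinearMap.mulLeft F a).charpoly ∈ lifts (algebraMap Ca F) := by
    rw [lifts_iff_coeff_lifts]
    intro j
    exact ⟨⟨_, hcoeff j⟩, rfl⟩
  obtain ⟨f, hf, _, hfm⟩ :=
    Polynomial.lifts_and_degree_eq_and_monic hlift (LinearMap.charpoly_monic _)
  have hd : a.charpoly ∣ f.map (algebraMap Ca F) := by
    rw [hf, charpoly_mulLeft]
    rcases Nat.eq_zero_or_pos n with rfl | hn
    · have : a.charpoly = 1 := by
        rw [Matrix.charpoly, Matrix.det_isEmpty]
      rw [this]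
      simp
    · exact dvd_pow_self _ hn.ne'
  have := integralClosure.mem_lifts_of_monic_of_dvd_map F hfm (a.charpoly_monic) hd
  rw [lifts_iff_coeff_lifts] at this
  obtain ⟨⟨x, hx⟩, hxeq⟩ := this i
  rw [← hxeq]
  exact hx
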